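/- arXiv:1807.11687 — 2 statements merged into one kernel-verified Lean document; each statement's English description precedes it below -/
import Mathlib

section
/- For s ≤ t in (0,1), define r₁(s,t) = (s(1-t))/(t(1-s)). Then for each fixed t ∈ (0,1), the limit as s → 0 of (1 - r₁(t, t+s))/|s| equals 1/(t(1-t)); more precisely, for any 0 < T₁ < T₂ < 1, lim_{ε→0} sup_{t, t+s ∈ [T₁,T₂], 0<|s|<ε} |(1 - r₁(t,t+s))/|s| − 1/(t(1-t))| = 0. -/
noncomputable def r1 (s t : ℝ) : ℝ :=
  (min s t * (1 - max s t)) / (max s t * (1 - min s t))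

theorem stmt_0 (T₁ T₂ : ℝ) (h1 : 0 < T₁) (h12 : T₁ < T₂) (h2 : T₂ < 1) :
    ∀ δ > (0 : ℝ), ∃ ε > (0 : ℝ), ∀ t s : ℝ,
      t ∈ Set.Icc T₁ T₂ → t + s ∈ Set.Icc T₁ T₂ → 0 < |s| → |s| < ε →
      |(1 - r1 t (t + s)) / |s| - 1 / (t * (1 - t))| < δ := by
  intro δ hδ
  set c := T₁ * (1 - T₂) with hc
  have hcpos : 0 < c := mul_pos h1 (by linarith)
  refine ⟨δ * c ^ 3, by positivity, ?_⟩
  intro t s ht hts hs hsε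
  obtain ⟨ht1, ht2⟩ := ht
  obtain ⟨hts1, hts2⟩ := hts
  have htpos : 0 < t := lt_of_lt_of_le h1 ht1
  have h1t : 0 < 1 - t := by linarith
  have htspos : 0 < t + s := by linarith
  have h1ts : 0 < 1 - (t + s) := by linarith
  have hct : c ≤ t := by nlinarith
  have hc1t : c ≤ 1 - t := by nlinarith
  have hcts : c ≤ t + s := by nlinarith
  have hc1ts : c ≤ 1 - (t + s) := by nlinarith
  have hs0 : s ≠ 0 := fun h => by simp [h] at hs
  rcases lt_or_gt_of_ne hs0 with hneg | hpos
  · -- s < 0 : min = t+s, max = t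
    have habs : |s| = -s := abs_of_neg hneg
    have hr : r1 t (t + s) = ((t + s) * (1 - t)) / (t * (1 - (t + s))) := by
      rw [r1, min_eq_right (by linarith), max_eq_left (by linarith)]
    have heq : (1 - r1 t (t + s)) / |s| = 1 / (t * (1 - (t + s))) := by
      rw [hr, habs]; field_simp; ring
    have hdiff : 1 / (t * (1 - (t + s))) - 1 / (t * (1 - t))
        = s / (t * (1 - (t + s)) * (1 - t)) := by
      field_simp; ring
    rw [heq, hdiff, abs_div, abs_of_pos (by positivity : (0:ℝ) < t * (1 - (t + s)) * (1 - t))]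
    have hD : c ^ 3 ≤ t * (1 - (t + s)) * (1 - t) := by
      calc c ^ 3 = c * c * c := by ring
        _ ≤ t * (1 - (t + s)) * (1 - t) :=
          mul_le_mul (mul_le_mul hct hc1ts hcpos.le htpos.le) hc1t hcpos.le (by positivity)
    rw [div_lt_iff₀ (by positivity)]
    nlinarith [mul_le_mul_of_nonneg_left hD hδ.le]
  · -- s > 0 : min = t, max = t+s
    have habs : |s| = s := abs_of_pos hpos
    have hr : r1 t (t + s) = (t * (1 - (t + s))) / ((t + s) * (1 - t)) := by
      rw [r1, min_eq_left (by linarith), max_eq_right (by linarith)]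
    have heq : (1 - r1 t (t + s)) / |s| = 1 / ((t + s) * (1 - t)) := by
      rw [hr, habs]; field_simp; ring
    have hdiff : 1 / ((t + s) * (1 - t)) - 1 / (t * (1 - t))
        = -s / ((t + s) * (1 - t) * t) := by
      field_simp; ring
    rw [heq, hdiff, abs_div, abs_of_pos (by positivity : (0:ℝ) < (t + s) * (1 - t) * t)]
    have hD : c ^ 3 ≤ (t + s) * (1 - t) * t := by
      calc c ^ 3 = c * c * c := by ring
        _ ≤ (t + s) * (1 - t) * t :=
          mul_le_mul (mul_le_mul hcts hc1t hcpos.le htspos.le) hct hcpos.le (by positivity)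
    rw [div_lt_iff₀ (by positivity)]
    have : |(-s)| = s := by rw [abs_neg, habs]
    rw [this]
    nlinarith [mul_le_mul_of_nonneg_left hD hδ.le]
end

section
/- For s ≤ t in (0,1), define r₂(s,t) = (s(1-t))/√(s(1-s)t(1-t)). Then for any 0 < T₁ < T₂ < 1, lim_{ε→0} sup_{t, t+s ∈ [T₁,T₂], 0<|s|<ε} |(1 - r₂(t,t+s))/|s| − 1/(2t(1-t))| = 0. -/
set_option maxHeartbeats 1000000

noncomputable def r2 (s t : ℝ) : ℝ :=
  (min s t * (1 - max s t)) /
    Real.sqrt (min s t * (1 - min s t) * (max s t) * (1 - max s t))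

theorem stmt_1 (T₁ T₂ : ℝ) (h1 : 0 < T₁) (h12 : T₁ < T₂) (h2 : T₂ < 1) :
    ∀ δ > (0 : ℝ), ∃ ε > (0 : ℝ), ∀ t s : ℝ,
      t ∈ Set.Icc T₁ T₂ → t + s ∈ Set.Icc T₁ T₂ → 0 < |s| → |s| < ε →
      |(1 - r2 t (t + s)) / |s| - 1 / (2 * t * (1 - t))| < δ := by
  intro δ hδ
  set m := T₁ * (1 - T₂) with hm_def
  clear_value m
  have hm : 0 < m := by rw [hm_def]; exact mul_pos h1 (by linarith)
  set sm := Real.sqrt m with hsm_def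
  clear_value sm
  have hsm : 0 < sm := by rw [hsm_def]; exact Real.sqrt_pos.mpr hm
  have hsm2 : sm ^ 2 = m := by rw [hsm_def]; exact Real.sq_sqrt hm.le
  refine ⟨2 * δ * sm ^ 5, by positivity, ?_⟩
  intro t s ht hts hs hsε
  obtain ⟨ht1, ht2⟩ := ht
  obtain ⟨hts1, hts2⟩ := hts
  set u := min t (t + s) with hu_def
  set v := max t (t + s) with hv_def
  clear_value u v
  have huv : u ≤ v := by rw [hu_def, hv_def]; exact min_le_max
  have hu1 : T₁ ≤ u := by rw [hu_def]; exact le_min ht1 hts1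
  have hv2 : v ≤ T₂ := by rw [hv_def]; exact max_le ht2 hts2
  have hu0 : 0 < u := lt_of_lt_of_le h1 hu1
  have hv1 : v < 1 := lt_of_le_of_lt hv2 h2
  have hu' : u < 1 := lt_of_le_of_lt huv hv1
  have hv0 : 0 < v := lt_of_lt_of_le hu0 huv
  have ht0 : 0 < t := lt_of_lt_of_le h1 ht1
  have ht1' : t < 1 := lt_of_le_of_lt ht2 h2
  have hvu : v - u = |s| := by
    rw [hu_def, hv_def, max_sub_min_eq_abs]
    simp [abs_sub_comm]
  have ha : 0 < u * (1 - v) := mul_pos hu0 (by linarith)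
  have hb : 0 < v * (1 - u) := mul_pos hv0 (by linarith)
  have hc : 0 < t * (1 - t) := mul_pos ht0 (by linarith)
  have ham : m ≤ u * (1 - v) := by
    rw [hm_def]; exact mul_le_mul hu1 (by linarith) (by linarith) (by linarith)
  have hbm : m ≤ v * (1 - u) := by
    rw [hm_def]; exact mul_le_mul (le_trans hu1 huv) (by linarith) (by linarith) (by linarith)
  have hcm : m ≤ t * (1 - t) := by
    rw [hm_def]; exact mul_le_mul ht1 (by linarith) (by linarith) (by linarith)
  have ha1 : u * (1 - v) ≤ 1 := mul_le_one₀ (by linarith) (by linarith) (by linarith)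
  have hb1 : v * (1 - u) ≤ 1 := mul_le_one₀ (by linarith) (by linarith) (by linarith)
  have hc1 : t * (1 - t) ≤ 1 := mul_le_one₀ (by linarith) (by linarith) (by linarith)
  -- a < b
  have huv' : u < v := by
    have h := hs
    rw [← hvu] at h
    linarith
  have hab : u * (1 - v) < v * (1 - u) := by
    have hdd : v * (1 - u) - u * (1 - v) = v - u := by ring
    linarith
  -- closeness of a, b to c
  have hac : |u * (1 - v) - t * (1 - t)| ≤ |s| := by
    rcases le_or_gt 0 s with h | h
    · have hu' : u = t := by rw [hu_def]; exact min_eq_left (by linarith)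
      have hv' : v = t + s := by rw [hv_def]; exact max_eq_right (by linarith)
      have hd : u * (1 - v) - t * (1 - t) = -(t * s) := by rw [hu', hv']; ring
      rw [hd, abs_neg, abs_mul, abs_of_pos ht0]
      exact mul_le_of_le_one_left (abs_nonneg s) (by linarith)
    · have hu' : u = t + s := by rw [hu_def]; exact min_eq_right (by linarith)
      have hv' : v = t := by rw [hv_def]; exact max_eq_left (by linarith)
      have hd : u * (1 - v) - t * (1 - t) = s * (1 - t) := by rw [hu', hv']; ring
      rw [hd, abs_mul, abs_of_pos (show (0:ℝ) < 1 - t by linarith)]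
      exact mul_le_of_le_one_right (abs_nonneg s) (by linarith)
  have hbc : |v * (1 - u) - t * (1 - t)| ≤ |s| := by
    rcases le_or_gt 0 s with h | h
    · have hu' : u = t := by rw [hu_def]; exact min_eq_left (by linarith)
      have hv' : v = t + s := by rw [hv_def]; exact max_eq_right (by linarith)
      have hd : v * (1 - u) - t * (1 - t) = s * (1 - t) := by rw [hu', hv']; ring
      rw [hd, abs_mul, abs_of_pos (show (0:ℝ) < 1 - t by linarith)]
      exact mul_le_of_le_one_right (abs_nonneg s) (by linarith)
    · have hu' : u = t + s := by rw [hu_def]; exact min_eq_right (by linarith)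
      have hv' : v = t := by rw [hv_def]; exact max_eq_left (by linarith)
      have hd : v * (1 - u) - t * (1 - t) = -(t * s) := by rw [hu', hv']; ring
      rw [hd, abs_neg, abs_mul, abs_of_pos ht0]
      exact mul_le_of_le_one_left (abs_nonneg s) (by linarith)
  set sa := Real.sqrt (u * (1 - v)) with hsa_def
  set sb := Real.sqrt (v * (1 - u)) with hsb_def
  set sc := Real.sqrt (t * (1 - t)) with hsc_def
  clear_value sa sb sc
  have hsa2 : sa ^ 2 = u * (1 - v) := by rw [hsa_def]; exact Real.sq_sqrt ha.le
  have hsb2 : sb ^ 2 = v * (1 - u) := by rw [hsb_def]; exact Real.sq_sqrt hb.le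
  have hsc2 : sc ^ 2 = t * (1 - t) := by rw [hsc_def]; exact Real.sq_sqrt hc.le
  have hsma : sm ≤ sa := by rw [hsm_def, hsa_def]; exact Real.sqrt_le_sqrt ham
  have hsmb : sm ≤ sb := by rw [hsm_def, hsb_def]; exact Real.sqrt_le_sqrt hbm
  have hsmc : sm ≤ sc := by rw [hsm_def, hsc_def]; exact Real.sqrt_le_sqrt hcm
  have hsa1 : sa ≤ 1 := by rw [hsa_def]; exact Real.sqrt_le_one.mpr ha1
  have hsb1 : sb ≤ 1 := by rw [hsb_def]; exact Real.sqrt_le_one.mpr hb1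
  have hsc1 : sc ≤ 1 := by rw [hsc_def]; exact Real.sqrt_le_one.mpr hc1
  have hsa0 : 0 < sa := lt_of_lt_of_le hsm hsma
  have hsb0 : 0 < sb := lt_of_lt_of_le hsm hsmb
  have hsc0 : 0 < sc := lt_of_lt_of_le hsm hsmc
  have hsab : sa < sb := by rw [hsa_def, hsb_def]; exact Real.sqrt_lt_sqrt ha.le hab
  -- the key identity
  have h0 : r2 t (t + s) = sa / sb := by
    simp only [r2]
    rw [← hu_def, ← hv_def,
      show u * (1 - u) * v * (1 - v) = (u * (1 - v)) * (v * (1 - u)) from by ring,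
      Real.sqrt_mul ha.le, ← hsa_def, ← hsb_def, ← hsa2]
    field_simp
  have hs2 : |s| = sb ^ 2 - sa ^ 2 := by
    rw [← hvu]; linear_combination hsa2 - hsb2
  have hr : (1 - r2 t (t + s)) / |s| = 1 / (sb * (sa + sb)) := by
    rw [h0, hs2]
    have h1 : sb ^ 2 - sa ^ 2 ≠ 0 :=
      sub_ne_zero_of_ne (pow_lt_pow_left₀ hsab hsa0.le two_ne_zero).ne'
    field_simp
    ring
  rw [hr, show (2 : ℝ) * t * (1 - t) = 2 * sc ^ 2 from by rw [hsc2]; ring]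
  -- Lipschitz estimates
  have e1 : |sa - sc| ≤ |s| / (2 * sm) := by
    rw [le_div_iff₀ (by positivity)]
    calc |sa - sc| * (2 * sm) ≤ |sa - sc| * (sa + sc) := by
          apply mul_le_mul_of_nonneg_left (by linarith) (abs_nonneg _)
      _ = |u * (1 - v) - t * (1 - t)| := by
          rw [← abs_of_pos (show (0:ℝ) < sa + sc by positivity), ← abs_mul]
          congr 1
          linear_combination hsa2 - hsc2
      _ ≤ |s| := hac
  have e2 : |sb - sc| ≤ |s| / (2 * sm) := by
    rw [le_div_iff₀ (by positivity)]
    calc |sb - sc| * (2 * sm) ≤ |sb - sc| * (sb + sc) := by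
          apply mul_le_mul_of_nonneg_left (by linarith) (abs_nonneg _)
      _ = |v * (1 - u) - t * (1 - t)| := by
          rw [← abs_of_pos (show (0:ℝ) < sb + sc by positivity), ← abs_mul]
          congr 1
          linear_combination hsb2 - hsc2
      _ ≤ |s| := hbc
  have hFpos : 0 < sb * (sa + sb) := by positivity
  have hGpos : (0:ℝ) < 2 * sc ^ 2 := by positivity
  have hnum : |2 * sc ^ 2 - sb * (sa + sb)| ≤ |s| / (2 * sm) * 4 := by
    have hd : 2 * sc ^ 2 - sb * (sa + sb) =
        sb * (sc - sa) + sc * (sc - sb) + (sc - sb) * (sb + sc) := by ring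
    rw [hd]
    calc |sb * (sc - sa) + sc * (sc - sb) + (sc - sb) * (sb + sc)|
        ≤ |sb * (sc - sa) + sc * (sc - sb)| + |(sc - sb) * (sb + sc)| := abs_add_le _ _
      _ ≤ |sb * (sc - sa)| + |sc * (sc - sb)| + |(sc - sb) * (sb + sc)| := by
          exact add_le_add_left (abs_add_le (sb * (sc - sa)) (sc * (sc - sb))) _
      _ = sb * |sc - sa| + sc * |sc - sb| + |sc - sb| * (sb + sc) := by
          rw [abs_mul, abs_mul, abs_mul, abs_of_pos hsb0, abs_of_pos hsc0,
            abs_of_pos (show (0:ℝ) < sb + sc by positivity)]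
      _ ≤ 1 * (|s| / (2 * sm)) + 1 * (|s| / (2 * sm)) + (|s| / (2 * sm)) * 2 := by
          rw [abs_sub_comm sc sa, abs_sub_comm sc sb]
          have hL : 0 ≤ |s| / (2 * sm) := by positivity
          refine add_le_add (add_le_add ?_ ?_) ?_
          · exact mul_le_mul hsb1 e1 (abs_nonneg _) (by norm_num)
          · exact mul_le_mul hsc1 e2 (abs_nonneg _) (by norm_num)
          · exact mul_le_mul e2 (by linarith) (by positivity) hL
      _ = |s| / (2 * sm) * 4 := by ring
  have hdiff : 1 / (sb * (sa + sb)) - 1 / (2 * sc ^ 2) =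
      (2 * sc ^ 2 - sb * (sa + sb)) / ((sb * (sa + sb)) * (2 * sc ^ 2)) := by
    field_simp
  rw [hdiff, abs_div, abs_of_pos (mul_pos hFpos hGpos)]
  have hF2 : 2 * sm ^ 2 ≤ sb * (sa + sb) := by
    have : sm * (sm + sm) ≤ sb * (sa + sb) :=
      mul_le_mul hsmb (by linarith) (by positivity) (by linarith)
    linarith [this]
  have hG2 : 2 * sm ^ 2 ≤ 2 * sc ^ 2 := by
    have : sm ^ 2 ≤ sc ^ 2 := pow_le_pow_left₀ hsm.le hsmc 2
    linarith
  have hden : 4 * sm ^ 4 ≤ (sb * (sa + sb)) * (2 * sc ^ 2) := by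
    have h4 : (2 * sm ^ 2) * (2 * sm ^ 2) ≤ (sb * (sa + sb)) * (2 * sc ^ 2) :=
      mul_le_mul hF2 hG2 (by positivity) (by positivity)
    linarith [h4, sq_nonneg sm]
  calc |2 * sc ^ 2 - sb * (sa + sb)| / ((sb * (sa + sb)) * (2 * sc ^ 2))
      ≤ (|s| / (2 * sm) * 4) / (4 * sm ^ 4) :=
        div_le_div₀ (by positivity) hnum (by positivity) hden
    _ = |s| / (2 * sm ^ 5) := by field_simp
    _ < δ := by
        rw [div_lt_iff₀ (by positivity)]
        calc |s| < 2 * δ * sm ^ 5 := hsε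
          _ = δ * (2 * sm ^ 5) := by ring
end
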